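/- Let G = K_1 ∨ (P_{ℓ₁} ∪ P_{ℓ₂} ∪ ⋯ ∪ P_{ℓ_r}) be a graph on n ≥ 5 vertices with ℓ₁, ℓ₂ ≥ 2, and let G' = K_1 ∨ (P_{ℓ₁+ℓ₂−1} ∪ P_1 ∪ ⋯ ∪ P_{ℓ_r}) be obtained by merging the two nontrivial paths. Then λ₁(G') > λ₁(G). -/

import Mathlib

open SimpleGraph Matrix

/-- Disjoint union of paths `P_{L 0}, …, P_{L (r-1)}`. -/
def pathsUnion (r : ℕ) (L : Fin r → ℕ) : SimpleGraph (Σ i, Fin (L i)) where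
  Adj x y := x.1 = y.1 ∧ ((x.2 : ℕ) + 1 = (y.2 : ℕ) ∨ (y.2 : ℕ) + 1 = (x.2 : ℕ))
  symm := ⟨by rintro x y ⟨h1, h2⟩; exact ⟨h1.symm, h2.symm⟩⟩
  loopless := ⟨by rintro x ⟨-, h | h⟩ <;> omega⟩

/-- Join of a graph with one new vertex (`K₁ ∨ F`), center `none`. -/
def cone {V : Type*} (F : SimpleGraph V) : SimpleGraph (Option V) where
  Adj x y := match x, y with
    | none, none => False
    | none, some _ => True
    | some _, none => True
    | some a, some b => F.Adj a b
  symm := ⟨by rintro (_ | a) (_ | b) h <;> simp_all <;> exact h.symm⟩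
  loopless := ⟨by rintro (_ | a) h <;> simp_all⟩

/-- Join of two graphs. -/
def gJoin {α β : Type*} (G : SimpleGraph α) (H : SimpleGraph β) : SimpleGraph (α ⊕ β) where
  Adj x y := match x, y with
    | .inl a, .inl b => G.Adj a b
    | .inr a, .inr b => H.Adj a b
    | _, _ => True
  symm := ⟨by rintro (a | a) (b | b) h <;> simp_all <;> exact h.symm⟩
  loopless := ⟨by rintro (a | a) h <;> simp_all⟩

/-- Cycle graph on `m` vertices. -/
def cycleG (m : ℕ) : SimpleGraph (Fin m) where
  Adj x y := x ≠ y ∧ (((x : ℕ) + 1) % m = (y : ℕ) ∨ ((y : ℕ) + 1) % m = (x : ℕ))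
  symm := ⟨by rintro x y ⟨h1, h2⟩; exact ⟨h1.symm, h2.symm⟩⟩
  loopless := ⟨by rintro x ⟨h, -⟩; exact h rfl⟩

/-- Real adjacency matrix of a graph. -/
noncomputable def adjMat {V : Type*} (G : SimpleGraph V) : Matrix V V ℝ :=
  letI := Classical.decRel G.Adj
  G.adjMatrix ℝ

/-- Largest adjacency eigenvalue. -/
noncomputable def maxEig {V : Type*} [Fintype V] [DecidableEq V] (G : SimpleGraph V) : ℝ :=
  sSup (spectrum ℝ (adjMat G))

/-- Smallest adjacency eigenvalue. -/
noncomputable def minEig {V : Type*} [Fintype V] [DecidableEq V] (G : SimpleGraph V) : ℝ :=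
  sInf (spectrum ℝ (adjMat G))

/-- Spread of a graph. -/
noncomputable def gspread {V : Type*} [Fintype V] [DecidableEq V] (G : SimpleGraph V) : ℝ :=
  maxEig G - minEig G

/-- Adjacency matrix of the path on `m` vertices. -/
def pathMatrix (m : ℕ) : Matrix (Fin m) (Fin m) ℝ :=
  Matrix.of fun a b => if (a : ℕ) + 1 = (b : ℕ) ∨ (b : ℕ) + 1 = (a : ℕ) then 1 else 0

/-- `H` is a minor of `G`. -/
def HasMinor {V W : Type*} (G : SimpleGraph V) (H : SimpleGraph W) : Prop :=
  ∃ B : W → Set V, (∀ w, (B w).Nonempty) ∧ (Pairwise fun a b => Disjoint (B a) (B b)) ∧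
    (∀ w, (G.induce (B w)).Connected) ∧
    (∀ ⦃a b⦄, H.Adj a b → ∃ u ∈ B a, ∃ v ∈ B b, G.Adj u v)

/-- Planarity via Wagner's theorem: no `K₅` and no `K_{3,3}` minor. -/
def IsPlanar {V : Type*} (G : SimpleGraph V) : Prop :=
  ¬ HasMinor G (⊤ : SimpleGraph (Fin 5)) ∧
  ¬ HasMinor G (completeBipartiteGraph (Fin 3) (Fin 3))

/-- Outerplanarity: no `K₄` and no `K_{2,3}` minor. -/
def IsOuterplanar {V : Type*} (G : SimpleGraph V) : Prop :=
  ¬ HasMinor G (⊤ : SimpleGraph (Fin 4)) ∧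
  ¬ HasMinor G (completeBipartiteGraph (Fin 2) (Fin 3))

open Classical in
lemma adjMat_apply' {V : Type*} (G : SimpleGraph V) (u v : V) :
    adjMat G u v = if G.Adj u v then 1 else 0 := by
  by_cases h : G.Adj u v <;> simp [adjMat, h]

lemma adjMat_nonneg {V : Type*} (G : SimpleGraph V) (u v : V) : 0 ≤ adjMat G u v := by
  rw [adjMat_apply']; split <;> norm_num

lemma adjMat_herm {V : Type*} [Fintype V] (G : SimpleGraph V) : (adjMat G).IsHermitian := by
  unfold Matrix.IsHermitian
  ext i j
  have hcomm : G.Adj i j ↔ G.Adj j i := G.adj_comm i j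
  by_cases h : G.Adj i j
  · simp [Matrix.conjTranspose_apply, adjMat_apply', h, hcomm.mp h]
  · simp [Matrix.conjTranspose_apply, adjMat_apply', h, mt hcomm.mpr h]

lemma rayleigh_le {n : Type*} [Fintype n] [DecidableEq n] {A : Matrix n n ℝ} (hA : A.IsHermitian)
    {lam : ℝ} (hl : ∀ i, hA.eigenvalues i ≤ lam) (x : n → ℝ) :
    x ⬝ᵥ (A *ᵥ x) ≤ lam * (x ⬝ᵥ x) := by
  have hstar : star (hA.eigenvectorUnitary : Matrix n n ℝ)
      = (hA.eigenvectorUnitary : Matrix n n ℝ)ᵀ := by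
    rw [Matrix.star_eq_conjTranspose, Matrix.conjTranspose_eq_transpose_of_trivial]
  set U : Matrix n n ℝ := (hA.eigenvectorUnitary : Matrix n n ℝ) with hU
  have hA' : A = U * Matrix.diagonal hA.eigenvalues * Uᵀ := by
    have h := hA.spectral_theorem
    rw [Unitary.conjStarAlgAut_apply, hstar] at h
    simpa using h
  have hUU : U * Uᵀ = 1 := by
    have h := (Matrix.mem_unitaryGroup_iff).mp hA.eigenvectorUnitary.2
    rwa [hstar] at h
  have hww : (Uᵀ *ᵥ x) ⬝ᵥ (Uᵀ *ᵥ x) = x ⬝ᵥ x := by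
    rw [Matrix.dotProduct_mulVec, Matrix.mulVec_transpose, Matrix.vecMul_vecMul, hUU,
      Matrix.vecMul_one]
  calc x ⬝ᵥ (A *ᵥ x) = (Uᵀ *ᵥ x) ⬝ᵥ (Matrix.diagonal hA.eigenvalues *ᵥ (Uᵀ *ᵥ x)) := by
        conv_lhs => rw [hA']
        rw [← Matrix.mulVec_mulVec, ← Matrix.mulVec_mulVec, Matrix.dotProduct_mulVec,
          ← Matrix.mulVec_transpose]
    _ = ∑ i, hA.eigenvalues i * ((Uᵀ *ᵥ x) i * (Uᵀ *ᵥ x) i) := by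
        simp only [dotProduct, Matrix.mulVec_diagonal]
        exact Finset.sum_congr rfl (fun i _ => by ring)
    _ ≤ ∑ i, lam * ((Uᵀ *ᵥ x) i * (Uᵀ *ᵥ x) i) := by
        apply Finset.sum_le_sum
        intro i _
        nlinarith [sq_nonneg ((Uᵀ *ᵥ x) i), hl i]
    _ = lam * ((Uᵀ *ᵥ x) ⬝ᵥ (Uᵀ *ᵥ x)) := by rw [dotProduct, Finset.mul_sum]
    _ = lam * (x ⬝ᵥ x) := by rw [hww]

lemma maxEig_spec {n : Type*} [Fintype n] [DecidableEq n] [Nonempty n] (G : SimpleGraph n) :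
    ∃ y : n → ℝ, y ≠ 0 ∧ adjMat G *ᵥ y = maxEig G • y ∧
      ∀ x : n → ℝ, x ⬝ᵥ (adjMat G *ᵥ x) ≤ maxEig G * (x ⬝ᵥ x) := by
  have hA := adjMat_herm G
  obtain ⟨i₀, hmax⟩ := Finite.exists_max hA.eigenvalues
  have hub : ∀ z ∈ Set.range hA.eigenvalues, z ≤ hA.eigenvalues i₀ := by
    rintro z ⟨j, rfl⟩; exact hmax j
  have hme : maxEig G = hA.eigenvalues i₀ := by
    unfold maxEig
    rw [hA.spectrum_eq_image_range, RCLike.ofReal_real_eq_id, Set.image_id]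
    exact le_antisymm (csSup_le ⟨_, ⟨i₀, rfl⟩⟩ hub) (le_csSup ⟨_, hub⟩ ⟨i₀, rfl⟩)
  refine ⟨(hA.eigenvectorBasis i₀ : EuclideanSpace ℝ n), ?_, ?_, ?_⟩
  · have h0 := hA.eigenvectorBasis.orthonormal.ne_zero i₀
    intro h; apply h0
    apply PiLp.ext; intro j; exact congrFun h j
  · rw [hme]; exact hA.mulVec_eigenvectorBasis i₀
  · intro x; rw [hme]; exact rayleigh_le hA hmax x

lemma cone_perron {V : Type*} [Fintype V] [DecidableEq V] [Nonempty V] (F : SimpleGraph V) :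
    ∃ y : Option V → ℝ, (∀ v, 0 < y v) ∧
      adjMat (cone F) *ᵥ y = maxEig (cone F) • y ∧ 0 < maxEig (cone F) := by
  classical
  set G := cone F with hG
  set A := adjMat G with hA
  set lam := maxEig G with hlam
  obtain ⟨y0, hy0, heig, hray⟩ := maxEig_spec G
  set y : Option V → ℝ := fun v => |y0 v| with hy
  have hynn : ∀ v, 0 ≤ y v := fun v => abs_nonneg _
  have hQ0 : y0 ⬝ᵥ (A *ᵥ y0) = lam * (y0 ⬝ᵥ y0) := by
    rw [heig, dotProduct_smul]; rfl
  have hSS : y ⬝ᵥ y = y0 ⬝ᵥ y0 := by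
    simp only [dotProduct, hy]
    exact Finset.sum_congr rfl fun v _ => abs_mul_abs_self _
  have hQmono : y0 ⬝ᵥ (A *ᵥ y0) ≤ y ⬝ᵥ (A *ᵥ y) := by
    simp only [dotProduct, Matrix.mulVec, Finset.mul_sum]
    apply Finset.sum_le_sum; intro u _
    apply Finset.sum_le_sum; intro v _
    have h1 : 0 ≤ A u v := adjMat_nonneg _ u v
    have h2 : y0 u * y0 v ≤ |y0 u| * |y0 v| := by
      rw [← abs_mul]; exact le_abs_self _
    simp only [dotProduct, hy]
    calc y0 u * (A u v * y0 v) = A u v * (y0 u * y0 v) := by ring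
      _ ≤ A u v * (|y0 u| * |y0 v|) := mul_le_mul_of_nonneg_left h2 h1
      _ = |y0 u| * (A u v * |y0 v|) := by ring
  have hQy : y ⬝ᵥ (A *ᵥ y) = lam * (y ⬝ᵥ y) := by
    refine le_antisymm (hray y) ?_
    rw [hSS, ← hQ0]; exact hQmono
  have hMpsd : (lam • (1 : Matrix (Option V) (Option V) ℝ) - A).PosSemidef := by
    rw [Matrix.posSemidef_iff_dotProduct_mulVec]
    constructor
    · have h := adjMat_herm G
      unfold Matrix.IsHermitian at h ⊢
      rw [Matrix.conjTranspose_sub, Matrix.conjTranspose_smul, Matrix.conjTranspose_one, h,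
        star_trivial]
    · intro x
      simp only [star_trivial, Matrix.sub_mulVec, Matrix.smul_mulVec, Matrix.one_mulVec,
        dotProduct_sub, dotProduct_smul, smul_eq_mul]
      linarith [hray x]
  have hMy : (lam • (1 : Matrix (Option V) (Option V) ℝ) - A) *ᵥ y = 0 := by
    rw [← hMpsd.dotProduct_mulVec_zero_iff]
    have hstar : star y = y := by funext i; simp
    rw [hstar]
    simp only [Matrix.sub_mulVec, Matrix.smul_mulVec, Matrix.one_mulVec,
      dotProduct_sub, dotProduct_smul, smul_eq_mul]
    rw [hQy]; ring
  have heigy : A *ᵥ y = lam • y := by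
    have h := hMy
    rw [Matrix.sub_mulVec, Matrix.smul_mulVec, Matrix.one_mulVec, sub_eq_zero] at h
    exact h.symm
  have hyne : y ≠ 0 := by
    intro h
    apply hy0
    funext v
    have h2 : |y0 v| = 0 := congrFun h v
    simpa [abs_eq_zero] using h2
  have hAnone : ∀ c : V, A none (some c) = 1 := by
    intro c; rw [hA, hG, adjMat_apply']; simp [cone]
  have hAsomenone : ∀ c : V, A (some c) none = 1 := by
    intro c; rw [hA, hG, adjMat_apply']; simp [cone]
  have hnone : 0 < y none := by
    rcases lt_or_eq_of_le (hynn none) with h | h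
    · exact h
    · exfalso
      have hAyn : (A *ᵥ y) none = 0 := by rw [heigy]; simp [← h]
      have hterms : ∀ v ∈ Finset.univ, 0 ≤ A none v * y v :=
        fun v _ => mul_nonneg (adjMat_nonneg _ _ _) (hynn v)
      have hz := (Finset.sum_eq_zero_iff_of_nonneg hterms).mp hAyn
      apply hyne
      funext v
      match v with
      | none => exact h.symm
      | some c =>
        have h3 := hz (some c) (Finset.mem_univ _)
        rw [hAnone c, one_mul] at h3
        exact h3
  have hsome : ∀ c : V, 0 < lam * y (some c) := by
    intro c
    have h1 : (A *ᵥ y) (some c) = lam * y (some c) := by rw [heigy]; rfl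
    have h2 : y none ≤ (A *ᵥ y) (some c) := by
      rw [Matrix.mulVec]
      calc y none = A (some c) none * y none := by rw [hAsomenone, one_mul]
        _ ≤ ∑ v, A (some c) v * y v := by
            apply Finset.single_le_sum (f := fun v => A (some c) v * y v)
            · exact fun v _ => mul_nonneg (adjMat_nonneg _ _ _) (hynn v)
            · exact Finset.mem_univ _
        _ = _ := rfl
    linarith
  have hlampos : 0 < lam := by
    obtain ⟨c⟩ := (inferInstance : Nonempty V)
    rcases (mul_pos_iff.mp (hsome c)) with ⟨h, _⟩ | ⟨_, h⟩
    · exact h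
    · exact absurd (hynn (some c)) (not_le.mpr h)
  refine ⟨y, ?_, heigy, hlampos⟩
  intro v
  match v with
  | none => exact hnone
  | some c =>
    rcases (mul_pos_iff.mp (hsome c)) with ⟨_, h⟩ | ⟨_, h⟩
    · exact h
    · exact absurd (hynn (some c)) (not_le.mpr h)

def mL (r : ℕ) (L : Fin (r+2) → ℕ) : Fin (r+2) → ℕ :=
  Function.update (Function.update L 0 (L 0 + L 1 - 1)) 1 1

lemma fin_zero_ne_one {r : ℕ} : (0 : Fin (r+2)) ≠ 1 := by
  simp [Fin.ext_iff]

lemma mL_zero {r : ℕ} (L : Fin (r+2) → ℕ) : mL r L 0 = L 0 + L 1 - 1 := by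
  unfold mL
  rw [Function.update_of_ne fin_zero_ne_one, Function.update_self]

lemma mL_one {r : ℕ} (L : Fin (r+2) → ℕ) : mL r L 1 = 1 := Function.update_self _ _ _

lemma mL_other {r : ℕ} (L : Fin (r+2) → ℕ) {i : Fin (r+2)} (h0 : i ≠ 0) (h1 : i ≠ 1) :
    mL r L i = L i := by
  unfold mL
  rw [Function.update_of_ne h1, Function.update_of_ne h0]

variable {r : ℕ} {L : Fin (r+2) → ℕ} {a b : Fin (r+2)}

def gMap (r : ℕ) (L : Fin (r+2) → ℕ) (a b : Fin (r+2)) (ha : 2 ≤ L a)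
    (hab : L 0 + L 1 = L a + L b) : (Σ i, Fin (mL r L i)) → Σ i, Fin (L i) := fun x =>
  match x with
  | ⟨i, j⟩ =>
    if h0 : i = 0 then
      if hj : (j : ℕ) < L a - 1 then ⟨a, ⟨L a - 1 - (j : ℕ), by omega⟩⟩
      else ⟨b, ⟨(j : ℕ) - (L a - 1), by
        subst h0
        have hx := j.isLt
        have hz := mL_zero L
        omega⟩⟩
    else if h1 : i = 1 then ⟨a, ⟨0, by omega⟩⟩
    else ⟨i, ⟨(j : ℕ), by
      have hx := j.isLt
      have hz := mL_other L h0 h1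
      omega⟩⟩

def pS (r : ℕ) (L : Fin (r+2) → ℕ) (a b : Fin (r+2)) (ha : 2 ≤ L a) (hb : 2 ≤ L b)
    (hab : L 0 + L 1 = L a + L b) : Σ i, Fin (mL r L i) :=
  ⟨0, ⟨L a - 1, by rw [mL_zero]; omega⟩⟩

def qS (r : ℕ) (L : Fin (r+2) → ℕ) (a b : Fin (r+2)) (ha : 2 ≤ L a) (hb : 2 ≤ L b)
    (hab : L 0 + L 1 = L a + L b) : Σ i, Fin (mL r L i) :=
  ⟨0, ⟨L a - 2, by rw [mL_zero]; omega⟩⟩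

def isoS (r : ℕ) (L : Fin (r+2) → ℕ) : Σ i, Fin (mL r L i) :=
  ⟨1, ⟨0, by rw [mL_one]; omega⟩⟩

lemma gMap_adj (ha : 2 ≤ L a) (hb : 2 ≤ L b)
    (hor : ((a:ℕ) = 0 ∧ (b:ℕ) = 1) ∨ ((a:ℕ) = 1 ∧ (b:ℕ) = 0))
    (hab : L 0 + L 1 = L a + L b) (x y : Σ i, Fin (mL r L i)) :
    (pathsUnion (r+2) (mL r L)).Adj x y ↔
      ((pathsUnion (r+2) L).Adj (gMap r L a b ha hab x) (gMap r L a b ha hab y) ∧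
        ¬ ((x = isoS r L ∧ y = qS r L a b ha hb hab) ∨ (x = qS r L a b ha hb hab ∧ y = isoS r L))) ∨
      ((x = pS r L a b ha hb hab ∧ y = qS r L a b ha hb hab) ∨
        (x = qS r L a b ha hb hab ∧ y = pS r L a b ha hb hab)) := by
  obtain ⟨i, j⟩ := x
  obtain ⟨i', j'⟩ := y
  have hane : (a : ℕ) ≠ (b : ℕ) := by omega
  have hz0 := mL_zero L
  have hz1 := mL_one L
  by_cases h0 : i = 0
  · subst h0
    have hj : (j : ℕ) < L a + L b - 1 := by have h := j.isLt; omega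
    by_cases h0' : i' = 0
    · subst h0'
      have hj' : (j' : ℕ) < L a + L b - 1 := by have h := j'.isLt; omega
      by_cases hs : (j : ℕ) < L a - 1 <;> by_cases hs' : (j' : ℕ) < L a - 1 <;>
        simp [pathsUnion, gMap, pS, qS, isoS, hs, hs',
          Sigma.mk.inj_iff, Fin.ext_iff, heq_eq_eq, Fin.val_zero, Fin.val_one,
          Fin.mk.injEq, fin_zero_ne_one] <;>
        omega
    · by_cases h1' : i' = 1
      · subst h1'
        have hj' : (j' : ℕ) < 1 := by have h := j'.isLt; omega
        by_cases hs : (j : ℕ) < L a - 1 <;>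
          simp [pathsUnion, gMap, pS, qS, isoS, hs,
            Sigma.mk.inj_iff, Fin.ext_iff, heq_eq_eq, Fin.val_zero, Fin.val_one,
            Fin.mk.injEq, fin_zero_ne_one] <;>
          omega
      · have hzo := mL_other L h0' h1'
        have hj' : (j' : ℕ) < L i' := by have h := j'.isLt; omega
        have h0v : ¬ (i' : ℕ) = 0 := fun h => h0' (Fin.ext (by rw [h]; simp))
        have h1v : ¬ (i' : ℕ) = 1 := fun h => h1' (Fin.ext (by rw [h]; simp))
        by_cases hs : (j : ℕ) < L a - 1 <;>
          simp [pathsUnion, gMap, pS, qS, isoS, hs, h0', h1',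
            Sigma.mk.inj_iff, Fin.ext_iff, heq_eq_eq, Fin.val_zero, Fin.val_one,
            Fin.mk.injEq, fin_zero_ne_one] <;>
          omega
  · by_cases h1 : i = 1
    · subst h1
      have hj : (j : ℕ) < 1 := by have h := j.isLt; omega
      by_cases h0' : i' = 0
      · subst h0'
        have hj' : (j' : ℕ) < L a + L b - 1 := by have h := j'.isLt; omega
        by_cases hs' : (j' : ℕ) < L a - 1 <;>
          simp [pathsUnion, gMap, pS, qS, isoS, hs',
            Sigma.mk.inj_iff, Fin.ext_iff, heq_eq_eq, Fin.val_zero, Fin.val_one,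
            Fin.mk.injEq, fin_zero_ne_one] <;>
          omega
      · by_cases h1' : i' = 1
        · subst h1'
          have hj' : (j' : ℕ) < 1 := by have h := j'.isLt; omega
          simp [pathsUnion, gMap, pS, qS, isoS,
            Sigma.mk.inj_iff, Fin.ext_iff, heq_eq_eq, Fin.val_zero, Fin.val_one,
            Fin.mk.injEq, fin_zero_ne_one] <;>
          omega
        · have hzo := mL_other L h0' h1'
          have hj' : (j' : ℕ) < L i' := by have h := j'.isLt; omega
          have h0v : ¬ (i' : ℕ) = 0 := fun h => h0' (Fin.ext (by rw [h]; simp))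
          have h1v : ¬ (i' : ℕ) = 1 := fun h => h1' (Fin.ext (by rw [h]; simp))
          simp [pathsUnion, gMap, pS, qS, isoS, h0', h1',
            Sigma.mk.inj_iff, Fin.ext_iff, heq_eq_eq, Fin.val_zero, Fin.val_one,
            Fin.mk.injEq, fin_zero_ne_one] <;>
          omega
    · have hzo := mL_other L h0 h1
      have hj : (j : ℕ) < L i := by have h := j.isLt; omega
      have h0v : ¬ (i : ℕ) = 0 := fun h => h0 (Fin.ext (by rw [h]; simp))
      have h1v : ¬ (i : ℕ) = 1 := fun h => h1 (Fin.ext (by rw [h]; simp))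
      by_cases h0' : i' = 0
      · subst h0'
        have hj' : (j' : ℕ) < L a + L b - 1 := by have h := j'.isLt; omega
        by_cases hs' : (j' : ℕ) < L a - 1 <;>
          simp [pathsUnion, gMap, pS, qS, isoS, hs', h0, h1,
            Sigma.mk.inj_iff, Fin.ext_iff, heq_eq_eq, Fin.val_zero, Fin.val_one,
            Fin.mk.injEq, fin_zero_ne_one] <;>
          omega
      · by_cases h1' : i' = 1
        · subst h1'
          have hj' : (j' : ℕ) < 1 := by have h := j'.isLt; omega
          simp [pathsUnion, gMap, pS, qS, isoS, h0, h1,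
            Sigma.mk.inj_iff, Fin.ext_iff, heq_eq_eq, Fin.val_zero, Fin.val_one,
            Fin.mk.injEq, fin_zero_ne_one] <;>
          omega
        · have hzo' := mL_other L h0' h1'
          have hj' : (j' : ℕ) < L i' := by have h := j'.isLt; omega
          have h0v' : ¬ (i' : ℕ) = 0 := fun h => h0' (Fin.ext (by rw [h]; simp))
          have h1v' : ¬ (i' : ℕ) = 1 := fun h => h1' (Fin.ext (by rw [h]; simp))
          simp [pathsUnion, gMap, pS, qS, isoS, h0, h1, h0', h1',
            Sigma.mk.inj_iff, Fin.ext_iff, heq_eq_eq, Fin.val_zero, Fin.val_one,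
            Fin.mk.injEq, fin_zero_ne_one] <;>
          omega

lemma gMap_inj (ha : 2 ≤ L a) (hb : 2 ≤ L b)
    (hor : ((a:ℕ) = 0 ∧ (b:ℕ) = 1) ∨ ((a:ℕ) = 1 ∧ (b:ℕ) = 0))
    (hab : L 0 + L 1 = L a + L b) : Function.Injective (gMap r L a b ha hab) := by
  intro x y hxy
  obtain ⟨i, j⟩ := x
  obtain ⟨i', j'⟩ := y
  have hane : (a : ℕ) ≠ (b : ℕ) := by omega
  have haneF : ¬ a = b := fun h => hane (by rw [h])
  have haneF' : ¬ b = a := fun h => hane (by rw [h])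
  have hz0 := mL_zero L
  have hz1 := mL_one L
  by_cases h0 : i = 0
  · subst h0
    have hj : (j : ℕ) < L a + L b - 1 := by have h := j.isLt; omega
    by_cases h0' : i' = 0
    · subst h0'
      have hj' : (j' : ℕ) < L a + L b - 1 := by have h := j'.isLt; omega
      by_cases hs : (j : ℕ) < L a - 1 <;> by_cases hs' : (j' : ℕ) < L a - 1 <;>
        simp [gMap, hs, hs', Sigma.mk.inj_iff, Fin.ext_iff, heq_eq_eq, Fin.mk.injEq,
          haneF, haneF'] at hxy <;>
        simp [Fin.ext_iff] <;> omega
    · by_cases h1' : i' = 1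
      · subst h1'
        have hj' : (j' : ℕ) < 1 := by have h := j'.isLt; omega
        by_cases hs : (j : ℕ) < L a - 1 <;>
          simp [gMap, hs, Sigma.mk.inj_iff, Fin.ext_iff, heq_eq_eq, Fin.mk.injEq,
            haneF, haneF'] at hxy <;>
          omega
      · have hzo := mL_other L h0' h1'
        have h0v : ¬ (i' : ℕ) = 0 := fun h => h0' (Fin.ext (by rw [h]; simp))
        have h1v : ¬ (i' : ℕ) = 1 := fun h => h1' (Fin.ext (by rw [h]; simp))
        have hia : ¬ a = i' := fun h => by have := congrArg Fin.val h; omega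
        have hib : ¬ b = i' := fun h => by have := congrArg Fin.val h; omega
        by_cases hs : (j : ℕ) < L a - 1 <;>
          simp [gMap, hs, h0', h1', Sigma.mk.inj_iff, Fin.ext_iff, heq_eq_eq, Fin.mk.injEq,
            hia, hib] at hxy
  · by_cases h1 : i = 1
    · subst h1
      have hj : (j : ℕ) < 1 := by have h := j.isLt; omega
      by_cases h0' : i' = 0
      · subst h0'
        have hj' : (j' : ℕ) < L a + L b - 1 := by have h := j'.isLt; omega
        by_cases hs' : (j' : ℕ) < L a - 1 <;>
          simp [gMap, hs', Sigma.mk.inj_iff, Fin.ext_iff, heq_eq_eq, Fin.mk.injEq,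
            haneF, haneF'] at hxy <;>
          omega
      · by_cases h1' : i' = 1
        · subst h1'
          have hj' : (j' : ℕ) < 1 := by have h := j'.isLt; omega
          exact Sigma.mk.inj_iff.mpr ⟨rfl, heq_of_eq (Fin.ext (by omega))⟩
        · have hzo := mL_other L h0' h1'
          have h0v : ¬ (i' : ℕ) = 0 := fun h => h0' (Fin.ext (by rw [h]; simp))
          have h1v : ¬ (i' : ℕ) = 1 := fun h => h1' (Fin.ext (by rw [h]; simp))
          have hia : ¬ a = i' := fun h => by have := congrArg Fin.val h; omega
          simp [gMap, h0', h1', Sigma.mk.inj_iff, Fin.ext_iff, heq_eq_eq, Fin.mk.injEq,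
            hia] at hxy
    · have hzo := mL_other L h0 h1
      have h0v : ¬ (i : ℕ) = 0 := fun h => h0 (Fin.ext (by rw [h]; simp))
      have h1v : ¬ (i : ℕ) = 1 := fun h => h1 (Fin.ext (by rw [h]; simp))
      have hai : ¬ i = a := fun h => by have := congrArg Fin.val h; omega
      have hbi : ¬ i = b := fun h => by have := congrArg Fin.val h; omega
      by_cases h0' : i' = 0
      · subst h0'
        by_cases hs' : (j' : ℕ) < L a - 1 <;>
          simp [gMap, hs', h0, h1, Sigma.mk.inj_iff, Fin.ext_iff, heq_eq_eq, Fin.mk.injEq,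
            hai, hbi] at hxy
      · by_cases h1' : i' = 1
        · subst h1'
          simp [gMap, h0, h1, Sigma.mk.inj_iff, Fin.ext_iff, heq_eq_eq, Fin.mk.injEq,
            hai] at hxy
        · simp only [gMap, dif_neg h0, dif_neg h1, dif_neg h0', dif_neg h1'] at hxy
          obtain ⟨hfst, hsnd⟩ := Sigma.mk.inj_iff.mp hxy
          subst hfst
          rw [heq_eq_eq, Fin.mk.injEq] at hsnd
          simp [Sigma.mk.inj_iff, heq_eq_eq, Fin.ext_iff]
          omega

lemma card_eq (ha : 2 ≤ L a) (hb : 2 ≤ L b) (hab : L 0 + L 1 = L a + L b) :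
    Fintype.card (Σ i, Fin (mL r L i)) = Fintype.card (Σ i, Fin (L i)) := by
  classical
  rw [Fintype.card_sigma, Fintype.card_sigma]
  simp only [Fintype.card_fin]
  rw [Fin.sum_univ_succ (f := fun i => mL r L i), Fin.sum_univ_succ,
    Fin.sum_univ_succ (f := fun i => L i), Fin.sum_univ_succ]
  have hsucc0 : (Fin.succ 0 : Fin (r+2)) = 1 := by
    apply Fin.ext
    simp
  rw [hsucc0]
  have h2 : ∀ i : Fin r, mL r L i.succ.succ = L i.succ.succ := by
    intro i
    apply mL_other
    · exact Fin.succ_ne_zero _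
    · intro h
      have h2 := congrArg Fin.val h
      simp [Fin.val_succ] at h2
  have hs : ∑ i : Fin r, mL r L i.succ.succ = ∑ i : Fin r, L i.succ.succ :=
    Finset.sum_congr rfl (fun i _ => h2 i)
  have hz0 := mL_zero L
  have hz1 := mL_one L
  omega

variable (ha : 2 ≤ L a) (hb : 2 ≤ L b)
  (hor : ((a:ℕ) = 0 ∧ (b:ℕ) = 1) ∨ ((a:ℕ) = 1 ∧ (b:ℕ) = 0))
  (hab : L 0 + L 1 = L a + L b)

lemma g_pS : gMap r L a b ha hab (pS r L a b ha hb hab) = ⟨b, ⟨0, by omega⟩⟩ := by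
  simp only [gMap, pS]
  simp only [↓reduceDIte, lt_self_iff_false]
  exact Sigma.mk.inj_iff.mpr ⟨rfl, heq_of_eq (Fin.ext (by simp))⟩

lemma g_qS : gMap r L a b ha hab (qS r L a b ha hb hab) = ⟨a, ⟨1, by omega⟩⟩ := by
  simp only [gMap, qS]
  simp only [↓reduceDIte, show L a - 2 < L a - 1 by omega]
  exact Sigma.mk.inj_iff.mpr ⟨rfl, heq_of_eq (Fin.ext (by simp; omega))⟩

lemma g_isoS : gMap r L a b ha hab (isoS r L) = ⟨a, ⟨0, by omega⟩⟩ := by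
  simp only [gMap, isoS]
  simp only [show ¬ (1 : Fin (r+2)) = 0 from fun h => fin_zero_ne_one h.symm, ↓reduceDIte]

noncomputable def pairInd {α : Type*} (p q : α) (u v : α) : ℝ :=
  letI := Classical.dec ((u = p ∧ v = q) ∨ (u = q ∧ v = p))
  if (u = p ∧ v = q) ∨ (u = q ∧ v = p) then 1 else 0

open Classical in
lemma pairInd_apply {α : Type*} (p q u v : α) :
    pairInd p q u v = if (u = p ∧ v = q) ∨ (u = q ∧ v = p) then 1 else 0 := by
  by_cases h : (u = p ∧ v = q) ∨ (u = q ∧ v = p) <;> simp [pairInd, h]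


lemma pS_ne_qS : pS r L a b ha hb hab ≠ qS r L a b ha hb hab := by
  intro h
  obtain ⟨-, h2⟩ := Sigma.mk.inj_iff.mp h
  rw [heq_eq_eq] at h2
  have := congrArg Fin.val h2
  simp at this
  omega

lemma pS_ne_isoS : pS r L a b ha hb hab ≠ isoS r L := by
  intro h
  exact fin_zero_ne_one (Sigma.mk.inj_iff.mp h).1

lemma qS_ne_isoS : qS r L a b ha hb hab ≠ isoS r L := by
  intro h
  exact fin_zero_ne_one (Sigma.mk.inj_iff.mp h).1

include ha hb hab in
lemma remAdj : (pathsUnion (r+2) L).Adj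
    (gMap r L a b ha hab (isoS r L)) (gMap r L a b ha hab (qS r L a b ha hb hab)) := by
  rw [g_isoS, g_qS]
  exact ⟨rfl, Or.inl (by simp)⟩

include ha hb hor hab in
lemma addNAdj : ¬ (pathsUnion (r+2) L).Adj
    (gMap r L a b ha hab (pS r L a b ha hb hab)) (gMap r L a b ha hab (qS r L a b ha hb hab)) := by
  rw [g_pS, g_qS]
  rintro ⟨h, -⟩
  have h2 := congrArg Fin.val h
  simp at h2
  omega

include ha hb hor hab in
lemma cone_entry (u v : Option (Σ i, Fin (mL r L i))) :
    adjMat (cone (pathsUnion (r+2) (mL r L))) u v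
      = adjMat (cone (pathsUnion (r+2) L)) (Option.map (gMap r L a b ha hab) u)
          (Option.map (gMap r L a b ha hab) v)
        + pairInd (some (pS r L a b ha hb hab)) (some (qS r L a b ha hb hab)) u v
        - pairInd (some (isoS r L)) (some (qS r L a b ha hb hab)) u v := by
  classical
  match u, v with
  | none, none => simp [adjMat_apply', cone, pairInd_apply]
  | none, some x => simp [adjMat_apply', cone, pairInd_apply]
  | some x, none => simp [adjMat_apply', cone, pairInd_apply]
  | some x, some y =>
    have hiff := gMap_adj ha hb hor hab x y
    have e1 : adjMat (cone (pathsUnion (r+2) (mL r L))) (some x) (some y)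
        = if (pathsUnion (r+2) (mL r L)).Adj x y then 1 else 0 := by
      by_cases h : (pathsUnion (r+2) (mL r L)).Adj x y <;> simp [adjMat_apply', cone, h]
    have e2 : adjMat (cone (pathsUnion (r+2) L)) (Option.map (gMap r L a b ha hab) (some x))
          (Option.map (gMap r L a b ha hab) (some y))
        = if (pathsUnion (r+2) L).Adj (gMap r L a b ha hab x) (gMap r L a b ha hab y)
          then 1 else 0 := by
      by_cases h : (pathsUnion (r+2) L).Adj (gMap r L a b ha hab x) (gMap r L a b ha hab y) <;>
        simp [adjMat_apply', cone, h]
    have e3 : pairInd (some (pS r L a b ha hb hab)) (some (qS r L a b ha hb hab))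
          (some x) (some y)
        = if ((x = pS r L a b ha hb hab ∧ y = qS r L a b ha hb hab) ∨
            (x = qS r L a b ha hb hab ∧ y = pS r L a b ha hb hab)) then 1 else 0 := by
      rw [pairInd_apply]
      simp only [Option.some.injEq]
    have e4 : pairInd (some (isoS r L)) (some (qS r L a b ha hb hab)) (some x) (some y)
        = if ((x = isoS r L ∧ y = qS r L a b ha hb hab) ∨
            (x = qS r L a b ha hb hab ∧ y = isoS r L)) then 1 else 0 := by
      rw [pairInd_apply]
      simp only [Option.some.injEq]
    rw [e1, e2, e3, e4]
    by_cases hadd : ((x = pS r L a b ha hb hab ∧ y = qS r L a b ha hb hab) ∨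
        (x = qS r L a b ha hb hab ∧ y = pS r L a b ha hb hab))
    · have hrem : ¬ ((x = isoS r L ∧ y = qS r L a b ha hb hab) ∨
          (x = qS r L a b ha hb hab ∧ y = isoS r L)) := by
        rcases hadd with ⟨rfl, rfl⟩ | ⟨rfl, rfl⟩
        · rintro (⟨h, -⟩ | ⟨-, h⟩)
          · exact pS_ne_isoS ha hb hab h
          · exact qS_ne_isoS ha hb hab h
        · rintro (⟨h, -⟩ | ⟨-, h⟩)
          · exact qS_ne_isoS ha hb hab h
          · exact pS_ne_isoS ha hb hab h
      have hP : ¬ (pathsUnion (r+2) L).Adj (gMap r L a b ha hab x) (gMap r L a b ha hab y) := by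
        rcases hadd with ⟨rfl, rfl⟩ | ⟨rfl, rfl⟩
        · exact addNAdj ha hb hor hab
        · exact fun h => addNAdj ha hb hor hab h.symm
      have hL : (pathsUnion (r+2) (mL r L)).Adj x y := hiff.mpr (Or.inr hadd)
      rw [if_pos hL, if_pos hadd, if_neg hP, if_neg hrem]
      norm_num
    · by_cases hrem : ((x = isoS r L ∧ y = qS r L a b ha hb hab) ∨
          (x = qS r L a b ha hb hab ∧ y = isoS r L))
      · have hP : (pathsUnion (r+2) L).Adj (gMap r L a b ha hab x) (gMap r L a b ha hab y) := by
          rcases hrem with ⟨rfl, rfl⟩ | ⟨rfl, rfl⟩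
          · exact remAdj ha hb hab
          · exact (remAdj ha hb hab).symm
        have hL : ¬ (pathsUnion (r+2) (mL r L)).Adj x y := by
          intro h
          rcases hiff.mp h with ⟨-, hn⟩ | hn
          · exact hn hrem
          · exact hadd hn
        rw [if_neg hL, if_pos hP, if_neg hadd, if_pos hrem]
        norm_num
      · have hL : (pathsUnion (r+2) (mL r L)).Adj x y ↔
            (pathsUnion (r+2) L).Adj (gMap r L a b ha hab x) (gMap r L a b ha hab y) := by
          constructor
          · intro h
            rcases hiff.mp h with ⟨h1, -⟩ | hn
            · exact h1
            · exact absurd hn hadd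
          · intro h
            exact hiff.mpr (Or.inl ⟨h, hrem⟩)
        rw [if_neg hadd, if_neg hrem]
        by_cases h : (pathsUnion (r+2) (mL r L)).Adj x y
        · rw [if_pos h, if_pos (hL.mp h)]; norm_num
        · rw [if_neg h, if_neg (fun h' => h (hL.mpr h'))]; norm_num


lemma pair_sum {α : Type*} [Fintype α] [DecidableEq α] (p q : α) (hpq : p ≠ q) (z : α → ℝ) :
    ∑ u, ∑ v, pairInd p q u v * (z u * z v) = 2 * (z p * z q) := by
  classical
  have h1 : ∀ u v : α, pairInd p q u v * (z u * z v) =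
      (if u = p ∧ v = q then z u * z v else 0) + (if u = q ∧ v = p then z u * z v else 0) := by
    intro u v
    rw [pairInd_apply]
    by_cases h1 : u = p ∧ v = q <;> by_cases h2 : u = q ∧ v = p
    · exact absurd (h1.1.symm.trans h2.1) hpq
    · rw [if_pos (Or.inl h1), if_pos h1, if_neg h2]; ring
    · rw [if_pos (Or.inr h2), if_neg h1, if_pos h2]; ring
    · rw [if_neg (by tauto), if_neg h1, if_neg h2]; ring
  have h2 : ∀ (p' q' : α), ∑ u, ∑ v, (if u = p' ∧ v = q' then z u * z v else 0) = z p' * z q' := by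
    intro p' q'
    have : ∀ u : α, ∑ v, (if u = p' ∧ v = q' then z u * z v else 0)
        = if u = p' then z u * z q' else 0 := by
      intro u
      by_cases hu : u = p'
      · simp only [hu, true_and, if_true]
        rw [Finset.sum_ite_eq' Finset.univ q' (fun v => z p' * z v)]
        simp
      · simp [hu]
    rw [Finset.sum_congr rfl (fun u _ => this u),
      Finset.sum_ite_eq' Finset.univ p' (fun u => z u * z q')]
    simp
  calc ∑ u, ∑ v, pairInd p q u v * (z u * z v)
      = ∑ u, ∑ v, ((if u = p ∧ v = q then z u * z v else 0)
          + (if u = q ∧ v = p then z u * z v else 0)) := by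
        exact Finset.sum_congr rfl fun u _ => Finset.sum_congr rfl fun v _ => h1 u v
    _ = (∑ u, ∑ v, (if u = p ∧ v = q then z u * z v else 0))
          + ∑ u, ∑ v, (if u = q ∧ v = p then z u * z v else 0) := by
        rw [← Finset.sum_add_distrib]
        exact Finset.sum_congr rfl fun u _ => Finset.sum_add_distrib
    _ = z p * z q + z q * z p := by rw [h2 p q, h2 q p]
    _ = 2 * (z p * z q) := by ring

lemma quad_expand {α : Type*} [Fintype α] (M : Matrix α α ℝ) (z : α → ℝ) :
    z ⬝ᵥ (M *ᵥ z) = ∑ u, ∑ v, M u v * (z u * z v) := by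
  simp only [dotProduct, Matrix.mulVec, Finset.mul_sum]
  exact Finset.sum_congr rfl fun u _ => Finset.sum_congr rfl fun v _ => by ring

lemma quad_reindex {α β : Type*} [Fintype α] [Fintype β] (e : α → β)
    (he : Function.Bijective e) (M : Matrix β β ℝ) (z : β → ℝ) :
    ∑ u, ∑ v, M (e u) (e v) * (z (e u) * z (e v)) = ∑ p, ∑ q, M p q * (z p * z q) :=
  Fintype.sum_bijective e he _ _ fun u =>
    Fintype.sum_bijective e he _ _ fun v => rfl

lemma sum_sq_reindex {α β : Type*} [Fintype α] [Fintype β] (e : α → β)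
    (he : Function.Bijective e) (z : β → ℝ) :
    ∑ u, (z (e u) * z (e u)) = ∑ p, z p * z p :=
  Fintype.sum_bijective e he _ _ fun u => rfl

lemma mulVec_iso (z : Option (Σ i, Fin (mL r L i)) → ℝ) :
    (adjMat (cone (pathsUnion (r+2) (mL r L))) *ᵥ z) (some (isoS r L)) = z none := by
  classical
  have hterm : ∀ v : Option (Σ i, Fin (mL r L i)),
      adjMat (cone (pathsUnion (r+2) (mL r L))) (some (isoS r L)) v * z v
        = if v = none then z v else 0 := by
    intro v
    match v with
    | none => simp [adjMat_apply', cone]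
    | some x =>
      have hnadj : ¬ (pathsUnion (r+2) (mL r L)).Adj (isoS r L) x := by
        obtain ⟨i, j⟩ := x
        rintro ⟨hfst, hsnd⟩
        simp only [isoS] at hfst hsnd
        have hfst' : (1 : Fin (r+2)) = i := hfst
        subst hfst'
        have hj := j.isLt
        have hz1 := mL_one L
        have hsnd' : 0 + 1 = (j:ℕ) ∨ (j:ℕ) + 1 = 0 := hsnd
        omega
      simp [adjMat_apply', cone, hnadj]
  show (∑ v, adjMat (cone (pathsUnion (r+2) (mL r L))) (some (isoS r L)) v * z v) = z none
  rw [Finset.sum_congr rfl (fun v _ => hterm v), Finset.sum_ite_eq' Finset.univ none z]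
  simp

lemma adj_iso_iso :
    adjMat (cone (pathsUnion (r+2) (mL r L))) (some (isoS r L)) (some (isoS r L)) = 0 := by
  rw [adjMat_apply']
  simp [cone]

include ha in
lemma mulVec_a0 (z : Option (Σ i, Fin (L i)) → ℝ) :
    (adjMat (cone (pathsUnion (r+2) L)) *ᵥ z)
        (some ⟨a, ⟨0, Nat.lt_of_lt_of_le Nat.zero_lt_two ha⟩⟩)
      = z none + z (some ⟨a, ⟨1, Nat.lt_of_lt_of_le Nat.one_lt_two ha⟩⟩) := by
  classical
  have hterm : ∀ v : Option (Σ i, Fin (L i)),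
      adjMat (cone (pathsUnion (r+2) L)) (some ⟨a, ⟨0, Nat.lt_of_lt_of_le Nat.zero_lt_two ha⟩⟩) v * z v
        = (if v = none then z v else 0)
          + (if v = some ⟨a, ⟨1, Nat.lt_of_lt_of_le Nat.one_lt_two ha⟩⟩ then z v else 0) := by
    intro v
    match v with
    | none => simp [adjMat_apply', cone]
    | some x =>
      by_cases hx : x = (⟨a, ⟨1, Nat.lt_of_lt_of_le Nat.one_lt_two ha⟩⟩ : Σ i, Fin (L i))
      · subst hx
        have hadj : (pathsUnion (r+2) L).Adj ⟨a, ⟨0, Nat.lt_of_lt_of_le Nat.zero_lt_two ha⟩⟩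
            ⟨a, ⟨1, Nat.lt_of_lt_of_le Nat.one_lt_two ha⟩⟩ :=
          ⟨rfl, Or.inl (by simp)⟩
        simp [adjMat_apply', cone, hadj]
      · have hnadj : ¬ (pathsUnion (r+2) L).Adj ⟨a, ⟨0, by omega⟩⟩ x := by
          obtain ⟨i, j⟩ := x
          rintro ⟨hfst, hsnd⟩
          have hfst' : a = i := hfst
          subst hfst'
          have hsnd' : 0 + 1 = (j:ℕ) ∨ (j:ℕ) + 1 = 0 := hsnd
          apply hx
          exact Sigma.mk.inj_iff.mpr ⟨rfl, heq_of_eq (Fin.ext (by simp; omega))⟩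
        simp [adjMat_apply', cone, hnadj, hx]
  show (∑ v, adjMat (cone (pathsUnion (r+2) L))
      (some ⟨a, ⟨0, Nat.lt_of_lt_of_le Nat.zero_lt_two ha⟩⟩) v * z v) = _
  rw [Finset.sum_congr rfl (fun v _ => hterm v), Finset.sum_add_distrib,
    Finset.sum_ite_eq' Finset.univ none z,
    Finset.sum_ite_eq' Finset.univ
      (some (⟨a, ⟨1, Nat.lt_of_lt_of_le Nat.one_lt_two ha⟩⟩ : Σ i, Fin (L i))) z]
  simp


include ha hb hor hab in
lemma merge_lt (y : Option (Σ i, Fin (L i)) → ℝ) (hypos : ∀ v, 0 < y v)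
    (heig : adjMat (cone (pathsUnion (r+2) L)) *ᵥ y = maxEig (cone (pathsUnion (r+2) L)) • y)
    (hlam : 0 < maxEig (cone (pathsUnion (r+2) L)))
    (hcomp : y (some ⟨a, ⟨0, by omega⟩⟩) ≤ y (some ⟨b, ⟨0, by omega⟩⟩)) :
    maxEig (cone (pathsUnion (r+2) L)) < maxEig (cone (pathsUnion (r+2) (mL r L))) := by
  classical
  have hgbij : Function.Bijective (gMap r L a b ha hab) :=
    (Fintype.bijective_iff_injective_and_card _).mpr ⟨gMap_inj ha hb hor hab, card_eq ha hb hab⟩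
  have hfbij : Function.Bijective (Option.map (gMap r L a b ha hab)) := by
    refine (Fintype.bijective_iff_injective_and_card _).mpr ⟨Option.map_injective hgbij.1, ?_⟩
    simp [Fintype.card_option, card_eq ha hb hab]
  set lam := maxEig (cone (pathsUnion (r+2) L)) with hlamdef
  set f := Option.map (gMap r L a b ha hab) with hfdef
  set y' : Option (Σ i, Fin (mL r L i)) → ℝ := fun u => y (f u) with hy'def
  set A' := adjMat (cone (pathsUnion (r+2) (mL r L))) with hA'def
  set A := adjMat (cone (pathsUnion (r+2) L)) with hAdef
  set S := y ⬝ᵥ y with hSdef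
  set ya0 := y (some ⟨a, ⟨0, by omega⟩⟩) with hya0def
  set ya1 := y (some ⟨a, ⟨1, by omega⟩⟩) with hya1def
  set yb0 := y (some ⟨b, ⟨0, by omega⟩⟩) with hyb0def
  set yn := y none with hyndef
  have hw0 : lam * ya0 = yn + ya1 := by
    have h1 := mulVec_a0 ha (L := L) (a := a) y
    rw [← hAdef, heig] at h1
    simpa using h1
  have hv_p : y' (some (pS r L a b ha hb hab)) = yb0 := by
    show y (Option.map (gMap r L a b ha hab) (some (pS r L a b ha hb hab))) = yb0
    rw [Option.map_some, g_pS]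
  have hv_q : y' (some (qS r L a b ha hb hab)) = ya1 := by
    show y (Option.map (gMap r L a b ha hab) (some (qS r L a b ha hb hab))) = ya1
    rw [Option.map_some, g_qS]
  have hv_i : y' (some (isoS r L)) = ya0 := by
    show y (Option.map (gMap r L a b ha hab) (some (isoS r L))) = ya0
    rw [Option.map_some, g_isoS]
  have hQA : y ⬝ᵥ (A *ᵥ y) = lam * S := by
    rw [heig, dotProduct_smul]
    rfl
  have hQ' : y' ⬝ᵥ (A' *ᵥ y') = lam * S + 2 * (yb0 * ya1) - 2 * (ya0 * ya1) := by
    rw [quad_expand]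
    have hsplit : ∀ u v : Option (Σ i, Fin (mL r L i)), A' u v * (y' u * y' v)
        = A (f u) (f v) * (y (f u) * y (f v))
          + pairInd (some (pS r L a b ha hb hab)) (some (qS r L a b ha hb hab)) u v
              * (y' u * y' v)
          - pairInd (some (isoS r L)) (some (qS r L a b ha hb hab)) u v * (y' u * y' v) := by
      intro u v
      rw [hA'def, cone_entry ha hb hor hab u v]
      show (A (f u) (f v) + _ - _) * _ = _
      ring
    calc ∑ u, ∑ v, A' u v * (y' u * y' v)
        = ∑ u, ∑ v, (A (f u) (f v) * (y (f u) * y (f v))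
            + pairInd (some (pS r L a b ha hb hab)) (some (qS r L a b ha hb hab)) u v
                * (y' u * y' v)
            - pairInd (some (isoS r L)) (some (qS r L a b ha hb hab)) u v * (y' u * y' v)) :=
          Finset.sum_congr rfl fun u _ => Finset.sum_congr rfl fun v _ => hsplit u v
      _ = (∑ u, ∑ v, A (f u) (f v) * (y (f u) * y (f v)))
            + (∑ u, ∑ v, pairInd (some (pS r L a b ha hb hab)) (some (qS r L a b ha hb hab)) u v
                * (y' u * y' v))
            - ∑ u, ∑ v, pairInd (some (isoS r L)) (some (qS r L a b ha hb hab)) u v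
                * (y' u * y' v) := by
          rw [← Finset.sum_add_distrib, ← Finset.sum_sub_distrib]
          exact Finset.sum_congr rfl fun u _ => by
            rw [← Finset.sum_add_distrib, ← Finset.sum_sub_distrib]
      _ = lam * S + 2 * (yb0 * ya1) - 2 * (ya0 * ya1) := by
          rw [quad_reindex f hfbij A y, ← quad_expand, hQA]
          rw [pair_sum _ _ (fun h => pS_ne_qS ha hb hab (Option.some_injective _ h)) y']
          rw [pair_sum _ _ (fun h => (qS_ne_isoS ha hb hab) (Option.some_injective _ h).symm) y']
          rw [hv_p, hv_q, hv_i]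
  set t := -(ya1 / lam) with htdef
  have hya1pos : 0 < ya1 := hypos _
  have hynpos : 0 < yn := hypos _
  have hlt : lam * t = -ya1 := by
    rw [htdef]
    field_simp
  have htneg : t < 0 := by
    rw [htdef]
    exact neg_lt_zero.mpr (div_pos hya1pos hlam)
  set evec : Option (Σ i, Fin (mL r L i)) → ℝ := Pi.single (some (isoS r L)) 1 with hevec
  set z := y' + t • evec with hzdef
  have hde1 : ∀ w : Option (Σ i, Fin (mL r L i)) → ℝ, evec ⬝ᵥ w = w (some (isoS r L)) := by
    intro w
    rw [hevec, single_dotProduct, one_mul]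
  have hde2 : ∀ w : Option (Σ i, Fin (mL r L i)) → ℝ, w ⬝ᵥ evec = w (some (isoS r L)) := by
    intro w
    rw [hevec, dotProduct_single, mul_one]
  have hsymdot : ∀ w u : Option (Σ i, Fin (mL r L i)) → ℝ,
      w ⬝ᵥ (A' *ᵥ u) = (A' *ᵥ w) ⬝ᵥ u := by
    intro w u
    rw [Matrix.dotProduct_mulVec]
    congr 1
    rw [← Matrix.mulVec_transpose]
    congr 1
    have h := adjMat_herm (cone (pathsUnion (r+2) (mL r L)))
    rw [Matrix.IsHermitian, Matrix.conjTranspose_eq_transpose_of_trivial] at h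
    rw [hA'def, h]
  have hAy'iso : (A' *ᵥ y') (some (isoS r L)) = yn := by
    have h := mulVec_iso (L := L) y'
    rw [← hA'def] at h
    exact h
  have hAeiso : (A' *ᵥ evec) (some (isoS r L)) = 0 := by
    have h := mulVec_iso (L := L) evec
    rw [← hA'def] at h
    rw [h, hevec]
    exact Pi.single_eq_of_ne (by simp) 1
  have hy'y' : y' ⬝ᵥ y' = S := by
    show (∑ u, y' u * y' u) = S
    rw [hSdef]
    exact sum_sq_reindex f hfbij y
  have c1 : y' ⬝ᵥ (A' *ᵥ evec) = yn := by
    rw [hsymdot y' evec, hde2, hAy'iso]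
  have c2 : evec ⬝ᵥ (A' *ᵥ y') = yn := by
    rw [hde1, hAy'iso]
  have c3 : evec ⬝ᵥ (A' *ᵥ evec) = 0 := by
    rw [hde1, hAeiso]
  have hQz : z ⬝ᵥ (A' *ᵥ z)
      = lam * S + 2 * (yb0 * ya1) - 2 * (ya0 * ya1) + 2 * (t * yn) := by
    rw [hzdef, Matrix.mulVec_add, Matrix.mulVec_smul, dotProduct_add, add_dotProduct,
      add_dotProduct, dotProduct_smul, dotProduct_smul, smul_dotProduct, smul_dotProduct,
      smul_eq_mul, smul_eq_mul, smul_eq_mul, smul_eq_mul, hQ', c1, c2, c3]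
    ring
  have hzz : z ⬝ᵥ z = S + 2 * (t * ya0) + t * t := by
    rw [hzdef, dotProduct_add, add_dotProduct, add_dotProduct, dotProduct_smul,
      smul_dotProduct, smul_dotProduct, dotProduct_smul, smul_eq_mul, smul_eq_mul,
      smul_eq_mul, smul_eq_mul, hy'y', hde2 y', hde1 y', hde1 evec, hv_i]
    rw [hevec, Pi.single_eq_same]
    ring
  have hzn : z none = yn := by
    rw [hzdef]
    show y' none + t * evec none = yn
    rw [hevec, Pi.single_eq_of_ne (by simp) 1]
    show yn + t * 0 = yn
    ring
  have hzpos : 0 < z ⬝ᵥ z := by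
    have h1 : z none * z none ≤ z ⬝ᵥ z := by
      exact Finset.single_le_sum (f := fun v => z v * z v)
        (fun i _ => mul_self_nonneg _) (Finset.mem_univ none)
    rw [hzn] at h1
    exact lt_of_lt_of_le (mul_pos hynpos hynpos) h1
  have hyn_eq : yn = lam * ya0 - ya1 := by linarith
  have key : z ⬝ᵥ (A' *ᵥ z) - lam * (z ⬝ᵥ z) = 2 * (yb0 - ya0) * ya1 + (-t) * ya1 := by
    rw [hQz, hzz]
    linear_combination (2*t) * hyn_eq + (-t) * hlt
  have hposkey : 0 < 2 * (yb0 - ya0) * ya1 + (-t) * ya1 := by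
    have h1 : 0 ≤ 2 * (yb0 - ya0) * ya1 :=
      mul_nonneg (by linarith) hya1pos.le
    have h2 : 0 < (-t) * ya1 := mul_pos (by linarith) hya1pos
    linarith
  have hineq : lam * (z ⬝ᵥ z) < z ⬝ᵥ (A' *ᵥ z) := by linarith
  have hne' : Nonempty (Σ i, Fin (mL r L i)) := ⟨isoS r L⟩
  obtain ⟨y2, hy2, he2, hray'⟩ := maxEig_spec (cone (pathsUnion (r+2) (mL r L)))
  have h2 := hray' z
  rw [← hA'def] at h2
  exact lt_of_mul_lt_mul_right (lt_of_lt_of_le hineq h2) hzpos.le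

theorem stmt_4 (r : ℕ) (L : Fin (r + 2) → ℕ) (h1 : 2 ≤ L 0) (h2 : 2 ≤ L 1)
    (hn : 5 ≤ 1 + ∑ i, L i) :
    maxEig (cone (pathsUnion (r + 2) L)) <
      maxEig (cone (pathsUnion (r + 2)
        (Function.update (Function.update L 0 (L 0 + L 1 - 1)) 1 1))) := by
  classical
  haveI hne : Nonempty (Σ i : Fin (r+2), Fin (L i)) := ⟨⟨0, ⟨0, by omega⟩⟩⟩
  obtain ⟨y, hypos, heig, hlam⟩ := cone_perron (pathsUnion (r+2) L)
  rcases le_total (y (some ⟨(0 : Fin (r+2)), ⟨0, by omega⟩⟩))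
      (y (some ⟨(1 : Fin (r+2)), ⟨0, by omega⟩⟩)) with hc | hc
  · exact merge_lt (a := 0) (b := 1) h1 h2 (Or.inl ⟨by simp, by simp⟩) rfl
      y hypos heig hlam hc
  · exact merge_lt (a := 1) (b := 0) h2 h1 (Or.inr ⟨by simp, by simp⟩) (Nat.add_comm _ _)
      y hypos heig hlam hc
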